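/- arXiv:1905.07577 — 3 statements merged into one kernel-verified Lean document; each statement's English description precedes it below -/
import Mathlib

section
/- Let 𝒜 be a prime unital ∗-algebra over ℂ containing a nontrivial projection P₁, and let Φ : 𝒜 → 𝒜 be a nonlinear ⋄-derivation such that Φ(I/2) and Φ(iI/2) are self-adjoint. Then Φ is additive: Φ(A + B) = Φ(A) + Φ(B) for all A, B ∈ 𝒜. -/
set_option linter.unusedSectionVars false
set_option linter.unusedVariables false
set_option maxHeartbeats 1000000

namespace Stmt11Aux
variable {𝒜 : Type*} [Ring 𝒜] [Algebra ℂ 𝒜] [StarRing 𝒜] [StarModule ℂ 𝒜]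

def dm (a b : 𝒜) : 𝒜 := star a * b - star b * a

lemma dm_add_right (c a b : 𝒜) : dm c (a + b) = dm c a + dm c b := by
  simp only [dm, star_add, mul_add, add_mul]; abel

lemma dm_sub_right (c a b : 𝒜) : dm c (a - b) = dm c a - dm c b := by
  simp only [dm, star_sub, mul_sub, sub_mul]; abel

lemma dm_zero_left (c : 𝒜) : dm 0 c = 0 := by simp [dm]

lemma corner_projL {P Q u : 𝒜} (hP : P*P = P) (hu : u = P*u*Q) : P * u = u := by
  rw [hu, ← mul_assoc, ← mul_assoc, hP]

lemma corner_projR {P Q u : 𝒜} (hQ : Q*Q = Q) (hu : u = P*u*Q) : u * Q = u := by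
  rw [hu, mul_assoc, hQ]

lemma corner_annL {P' P Q u : 𝒜} (hPP : P' * P = 0) (hu : u = P*u*Q) : P' * u = 0 := by
  rw [hu, ← mul_assoc, ← mul_assoc, hPP, zero_mul, zero_mul]

lemma corner_annR {P Q Q' u : 𝒜} (hQQ : Q * Q' = 0) (hu : u = P*u*Q) : u * Q' = 0 := by
  rw [hu, mul_assoc, hQQ, mul_zero]

lemma corner_star {P Q u : 𝒜} (hPs : star P = P) (hQs : star Q = Q) (hu : u = P*u*Q) :
    star u = Q * star u * P := by
  conv_lhs => rw [hu]
  rw [star_mul, star_mul, hQs, hPs, ← mul_assoc]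

lemma mk_mem {P Q a : 𝒜} (h1 : P * a = a) (h2 : a * Q = a) : a = P * a * Q := by
  conv_lhs => rw [← h2, ← h1]

lemma mulmul {a b c : 𝒜} (h : a * b = c) : ∀ t, a * (b * t) = c * t := fun t => by
  rw [← mul_assoc, h]

lemma mulmul0 {a b : 𝒜} (h : a * b = 0) : ∀ t : 𝒜, a * (b * t) = 0 := fun t => by
  rw [← mul_assoc, h, zero_mul]

lemma skew_w (x : 𝒜) : star (x - star x) = -(x - star x) := by
  rw [star_sub, star_star]; abel

lemma cancel2' (x y : 𝒜) (h : (2:ℂ) • x = (2:ℂ) • y) : x = y := by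
  have := congrArg (fun z : 𝒜 => ((2:ℂ)⁻¹) • z) h
  simpa [smul_smul] using this

lemma cIhalf : Complex.I * (-(Complex.I/2)) = 1/2 := by field_simp; simp [Complex.I_sq]

lemma extractL (M C : 𝒜) (hCs : star C = C)
    (e1 : dm C M = 0) (e2 : dm (Complex.I • C) M = 0) : C * M = 0 ∧ star M * C = 0 := by
  rw [dm, hCs, sub_eq_zero] at e1
  rw [dm, star_smul, Complex.star_def, Complex.conj_I, hCs, neg_smul, neg_mul,
    smul_mul_assoc, mul_smul_comm, sub_eq_zero] at e2
  have e3 : Complex.I • (C * M) + Complex.I • (star M * C) = 0 := by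
    rw [← e2]; abel
  rw [← e1] at e3
  have e4 : (2:ℂ) • (Complex.I • (C * M)) = (2:ℂ) • (0:𝒜) := by
    rw [two_smul, smul_zero, e3]
  have e5 := cancel2' _ _ e4
  have e6 : C * M = 0 := by
    have := congrArg (fun z : 𝒜 => (-Complex.I) • z) e5
    simpa [smul_smul, neg_mul, Complex.I_mul_I] using this
  exact ⟨e6, by rw [← e1, e6]⟩

section Phi
variable (Φ : 𝒜 → 𝒜)
  (hΦ : ∀ A B : 𝒜, Φ (star A * B - star B * A) =
      (star (Φ A) * B - star B * Φ A) + (star A * Φ B - star (Φ B) * A))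
include hΦ

lemma hdm : ∀ a b : 𝒜, Φ (dm a b) = dm (Φ a) b + dm a (Φ b) := hΦ

lemma phi_zero : Φ 0 = 0 := by
  have := hdm Φ hΦ 0 0
  simpa [dm] using this

lemma toolB (A B C : 𝒜) :
    dm C (Φ (A + B) - Φ A - Φ B)
      = Φ (dm C A + dm C B) - Φ (dm C A) - Φ (dm C B) := by
  have h0 := hdm Φ hΦ C (A + B)
  rw [dm_add_right] at h0
  rw [h0, hdm Φ hΦ C A, hdm Φ hΦ C B, dm_add_right, dm_sub_right, dm_sub_right]
  abel

variable (hsk : ∀ S : 𝒜, star S = -S → star (Φ S) = -Φ S)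
variable (P Q : 𝒜) (hP : P*P = P) (hQ : Q*Q = Q) (hPQ : P*Q = 0) (hQP : Q*P = 0)
  (hPs : star P = P) (hQs : star Q = Q) (hPQ1 : P + Q = 1)
variable (hprime : ∀ a b : 𝒜, (∀ x : 𝒜, a * x * b = 0) → a = 0 ∨ b = 0)
  (hPn : P ≠ 0) (hQn : Q ≠ 0)
include hsk hP hQ hPQ hQP hPs hQs hPQ1 hprime hPn hQn

lemma defect_skew (a b : 𝒜) (ha : star a = -a) (hb : star b = -b) :
    star (Φ (a + b) - Φ a - Φ b) = -(Φ (a + b) - Φ a - Φ b) := by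
  have hab : star (a + b) = -(a + b) := by rw [star_add, ha, hb]; abel
  rw [star_sub, star_sub, hsk _ hab, hsk _ ha, hsk _ hb]; abel

-- row additivity
lemma T1 (A B : 𝒜) (hA : P * A = A) (hB : Q * B = B) : Φ (A + B) = Φ A + Φ B := by
  have hPB : P * B = 0 := by rw [← hB, ← mul_assoc, hPQ, zero_mul]
  have hQA : Q * A = 0 := by rw [← hA, ← mul_assoc, hQP, zero_mul]
  have hsBP : star B * P = 0 := by
    rw [← hB, star_mul, hQs, mul_assoc, hQP, mul_zero]
  have hsAQ : star A * Q = 0 := by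
    rw [← hA, star_mul, hPs, mul_assoc, hPQ, mul_zero]
  have dPB : dm P B = 0 := by rw [dm, hPs, hPB, hsBP, sub_zero]
  have dQA : dm Q A = 0 := by rw [dm, hQs, hQA, hsAQ, sub_zero]
  have dIPB : dm (Complex.I • P) B = 0 := by
    simp [dm, star_smul, Complex.star_def, Complex.conj_I, smul_mul_assoc,
      mul_smul_comm, hPs, hPB, hsBP]
  have dIQA : dm (Complex.I • Q) A = 0 := by
    simp [dm, star_smul, Complex.star_def, Complex.conj_I, smul_mul_assoc,
      mul_smul_comm, hQs, hQA, hsAQ]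
  have tP := toolB Φ hΦ A B P
  rw [dPB, add_zero, phi_zero Φ hΦ, sub_zero, sub_self] at tP
  have tIP := toolB Φ hΦ A B (Complex.I • P)
  rw [dIPB, add_zero, phi_zero Φ hΦ, sub_zero, sub_self] at tIP
  have tQ := toolB Φ hΦ A B Q
  have tIQ := toolB Φ hΦ A B (Complex.I • Q)
  rw [dQA, zero_add, phi_zero Φ hΦ] at tQ
  rw [dIQA, zero_add, phi_zero Φ hΦ] at tIQ
  have tQ' : dm Q (Φ (A + B) - Φ A - Φ B) = 0 := by rw [tQ]; abel
  have tIQ' : dm (Complex.I • Q) (Φ (A + B) - Φ A - Φ B) = 0 := by rw [tIQ]; abel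
  have hPM := (extractL (Φ (A + B) - Φ A - Φ B) P hPs tP tIP).1
  have hQM := (extractL (Φ (A + B) - Φ A - Φ B) Q hQs tQ' tIQ').1
  have hM : Φ (A + B) - Φ A - Φ B = 0 := by
    have h : (P + Q) * (Φ (A + B) - Φ A - Φ B) = 0 := by
      rw [add_mul, hPM, hQM, add_zero]
    rwa [hPQ1, one_mul] at h
  rw [sub_sub, sub_eq_zero] at hM
  exact hM

lemma G3 (u v : 𝒜) (hu : u = P*u*Q) (hv : v = P*v*Q) :
    Φ ((u + v) - star (u + v)) = Φ (u - star u) + Φ (v - star v) := by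
  have hPu := corner_projL hP hu
  have hvQ := corner_projR hQ hv
  have hvP : v * P = 0 := corner_annR hQP hv
  have hvu : v * u = 0 := by rw [← hPu, ← mul_assoc, hvP, zero_mul]
  have hsu := corner_star hPs hQs hu
  have hsv := corner_star hPs hQs hv
  have hsuP : star u * P = star u := corner_projR hP hsu
  have hsuQ : star u * Q = 0 := corner_annR hPQ hsu
  have hsusv : star u * star v = 0 := by
    rw [hsv, ← mul_assoc, ← mul_assoc, hsuQ, zero_mul, zero_mul]
  have hQsv : Q * star v = star v := corner_projL hQ hsv
  have dAu : dm (P + star v) u = u - star u := by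
    rw [dm, star_add, hPs, star_star, add_mul, hPu, hvu, add_zero, mul_add, hsuP, hsusv,
      add_zero]
  have dAQ : dm (P + star v) Q = v - star v := by
    rw [dm, star_add, hPs, star_star, hQs, add_mul, hPQ, zero_add, hvQ, mul_add, hQP,
      zero_add, hQsv]
  have hT1 : Φ (u + Q) = Φ u + Φ Q :=
    T1 Φ hΦ hsk P Q hP hQ hPQ hQP hPs hQs hPQ1 hprime hPn hQn u Q hPu hQ
  have dAsum : dm (P + star v) (u + Q) = (u + v) - star (u + v) := by
    rw [dm_add_right, dAu, dAQ, star_add]; abel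
  calc Φ ((u + v) - star (u + v)) = Φ (dm (P + star v) (u + Q)) := by rw [dAsum]
    _ = dm (Φ (P + star v)) (u + Q) + dm (P + star v) (Φ (u + Q)) := hdm Φ hΦ _ _
    _ = dm (Φ (P + star v)) u + dm (Φ (P + star v)) Q
        + (dm (P + star v) (Φ u) + dm (P + star v) (Φ Q)) := by
        rw [dm_add_right, hT1, dm_add_right]
    _ = (dm (Φ (P + star v)) u + dm (P + star v) (Φ u))
        + (dm (Φ (P + star v)) Q + dm (P + star v) (Φ Q)) := by abel
    _ = Φ (dm (P + star v) u) + Φ (dm (P + star v) Q) := by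
        rw [hdm Φ hΦ, hdm Φ hΦ]
    _ = Φ (u - star u) + Φ (v - star v) := by rw [dAu, dAQ]

lemma E2loc (s x : 𝒜) (hs : s = P*s*P) (hss : star s = -s) (hx : x = P*x*Q) :
    Q * (Φ (s + (x - star x)) - Φ s - Φ (x - star x)) = 0 ∧
    (Φ (s + (x - star x)) - Φ s - Φ (x - star x)) * Q = 0 := by
  have hQs0 : Q * s = 0 := corner_annL hQP hs
  have hsQ0 : s * Q = 0 := corner_annR hPQ hs
  have dQs : dm Q s = 0 := by
    rw [dm, hQs, hss, hQs0, neg_mul, hsQ0, neg_zero, sub_zero]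
  have dIQs : dm (Complex.I • Q) s = 0 := by
    simp [dm, star_smul, Complex.star_def, Complex.conj_I, smul_mul_assoc, mul_smul_comm,
      hQs, hss, hQs0, hsQ0, neg_mul]
  have t := toolB Φ hΦ s (x - star x) Q
  rw [dQs, zero_add] at t
  have t' : dm Q (Φ (s + (x - star x)) - Φ s - Φ (x - star x)) = 0 := by
    rw [t, phi_zero Φ hΦ]; abel
  have tI := toolB Φ hΦ s (x - star x) (Complex.I • Q)
  rw [dIQs, zero_add] at tI
  have tI' : dm (Complex.I • Q) (Φ (s + (x - star x)) - Φ s - Φ (x - star x)) = 0 := by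
    rw [tI, phi_zero Φ hΦ]; abel
  have hext := extractL _ Q hQs t' tI'
  have hMsk := defect_skew Φ hΦ hsk P Q hP hQ hPQ hQP hPs hQs hPQ1 hprime hPn hQn
    s (x - star x) hss (skew_w x)
  refine ⟨hext.1, ?_⟩
  have h := hext.2
  rw [hMsk, neg_mul] at h
  exact neg_eq_zero.mp h

lemma E3 (x s : 𝒜) (hx : x = P*x*Q) (hs : s = Q*s*Q) (hss : star s = -s) :
    Φ ((x - star x) + s) = Φ (x - star x) + Φ s := by
  have hPs0 : P * s = 0 := corner_annL hPQ hs
  have hsP0 : s * P = 0 := corner_annR hQP hs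
  have hQx : Q * x = 0 := corner_annL hQP hx
  have hsx := corner_star hPs hQs hx
  have hsxQ : star x * Q = 0 := corner_annR hPQ hsx
  have hPx : P * x = x := corner_projL hP hx
  have hsQs : s * Q = s := corner_projR hQ hs
  have hQss : Q * s = s := corner_projL hQ hs
  have dPs : dm P s = 0 := by
    rw [dm, hPs, hss, hPs0, neg_mul, hsP0, neg_zero, sub_zero]
  have dIPs : dm (Complex.I • P) s = 0 := by
    simp [dm, star_smul, Complex.star_def, Complex.conj_I, smul_mul_assoc, mul_smul_comm,
      hPs, hss, hPs0, hsP0, neg_mul]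
  set M := Φ ((x - star x) + s) - Φ (x - star x) - Φ s with hMdef
  have t := toolB Φ hΦ (x - star x) s P
  rw [dPs, add_zero, phi_zero Φ hΦ, sub_zero, sub_self] at t
  have tI := toolB Φ hΦ (x - star x) s (Complex.I • P)
  rw [dIPs, add_zero, phi_zero Φ hΦ, sub_zero, sub_self] at tI
  have hext := extractL M P hPs t tI
  have hPM : P * M = 0 := hext.1
  have hMsk : star M = -M := defect_skew Φ hΦ hsk P Q hP hQ hPQ hQP hPs hQs hPQ1
    hprime hPn hQn (x - star x) s (skew_w x) hss
  have hMP : M * P = 0 := by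
    have h := hext.2; rw [hMsk, neg_mul] at h; exact neg_eq_zero.mp h
  have hQM : Q * M = M := by
    have h : P*M + Q*M = M := by rw [← add_mul, hPQ1, one_mul]
    rwa [hPM, zero_add] at h
  have hMQ : M * Q = M := by
    have h : M*P + M*Q = M := by rw [← mul_add, hPQ1, mul_one]
    rwa [hMP, zero_add] at h
  have key : ∀ z : 𝒜, P * (z * M) = 0 := by
    intro z
    have hCs : star (Q * star z * P) = P * z * Q := by
      rw [star_mul, star_mul, hPs, hQs, star_star, ← mul_assoc]
    have h1 : star (Q * star z * P) * x = 0 := by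
      rw [hCs, mul_assoc, hQx, mul_zero]
    have h2 : star x * (Q * star z * P) = 0 := by
      rw [← mul_assoc, ← mul_assoc, hsxQ, zero_mul, zero_mul]
    have dCw : dm (Q * star z * P) (x - star x)
        = x * (Q * star z * P) - star (x * (Q * star z * P)) := by
      conv_rhs => rw [star_mul]
      rw [dm, star_sub, star_star, mul_sub, sub_mul, h1, h2]
      abel
    have estar : star (star (Q * star z * P) * s) = star s * (Q * star z * P) := by
      rw [star_mul, star_star]
    have dCs : dm (Q * star z * P) s
        = star (Q * star z * P) * s - star (star (Q * star z * P) * s) := by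
      rw [dm, estar]
    -- memberships for E2loc
    have hg1 : P * (x * (Q * star z * P)) = x * (Q * star z * P) := by
      rw [← mul_assoc, hPx]
    have hCP : (Q * star z * P) * P = Q * star z * P := by rw [mul_assoc, hP]
    have hg2 : (x * (Q * star z * P)) * P = x * (Q * star z * P) := by
      rw [mul_assoc, hCP]
    have hgmem := mk_mem hg1 hg2
    have hgstar : star (x * (Q * star z * P)) = P * star (x * (Q * star z * P)) * P :=
      corner_star hPs hPs hgmem
    have hsmem : x * (Q * star z * P) - star (x * (Q * star z * P))
        = P * (x * (Q * star z * P) - star (x * (Q * star z * P))) * P := by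
      have e : P * (x * (Q * star z * P) - star (x * (Q * star z * P))) * P
          = P * (x * (Q * star z * P)) * P - P * (star (x * (Q * star z * P))) * P := by
        rw [mul_sub, sub_mul]
      rw [e, ← hgmem, ← hgstar]
    have hn1 : P * (star (Q * star z * P) * s) = star (Q * star z * P) * s := by
      rw [hCs]
      simp only [mul_assoc, mulmul hP]
    have hn2 : (star (Q * star z * P) * s) * Q = star (Q * star z * P) * s := by
      rw [mul_assoc, hsQs]
    have hnmem := mk_mem hn1 hn2
    have hloc := E2loc Φ hΦ hsk P Q hP hQ hPQ hQP hPs hQs hPQ1 hprime hPn hQn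
      (x * (Q * star z * P) - star (x * (Q * star z * P)))
      (star (Q * star z * P) * s) hsmem (skew_w _) hnmem
    have t2 := toolB Φ hΦ (x - star x) s (Q * star z * P)
    rw [dCw, dCs] at t2
    have h0 : P * (dm (Q * star z * P) M) * Q = 0 := by
      rw [t2, mul_assoc, hloc.2, mul_zero]
    have h1' : P * (dm (Q * star z * P) M) * Q = P * (z * M) := by
      rw [dm, hCs, hMsk, neg_mul, sub_neg_eq_add]
      simp only [mul_add, add_mul, mul_assoc, hPQ, hMQ, hQM, mulmul hP,
        mul_zero, zero_mul, add_zero, zero_add]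
    exact h1'.symm.trans h0
  have key' : ∀ z : 𝒜, P * z * M = 0 := fun z => by rw [mul_assoc]; exact key z
  rcases hprime P M key' with h | h
  · exact absurd h hPn
  · rw [hMdef] at h
    rw [sub_sub, sub_eq_zero] at h
    rw [h]

lemma GS (s t x : 𝒜) (hs : s = P*s*P) (hss : star s = -s) (ht : t = Q*t*Q)
    (htt : star t = -t) (hx : x = P*x*Q) :
    Φ (s + (t + (x - star x))) = Φ s + Φ (t + (x - star x)) := by
  have hQs0 : Q * s = 0 := corner_annL hQP hs
  have hsQ0 : s * Q = 0 := corner_annR hPQ hs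
  have hPs1 : P * s = s := corner_projL hP hs
  have hsP1 : s * P = s := corner_projR hP hs
  have hPt : P * t = 0 := corner_annL hPQ ht
  have htP : t * P = 0 := corner_annR hQP ht
  have hsx := corner_star hPs hQs hx
  have hQsx : Q * star x = star x := corner_projL hQ hsx
  have hPx : P * x = x := corner_projL hP hx
  have hxP : x * P = 0 := corner_annR hQP hx
  have hxQ : x * Q = x := corner_projR hQ hx
  have hPsx : P * star x = 0 := corner_annL hPQ hsx
  have dQs : dm Q s = 0 := by
    rw [dm, hQs, hss, hQs0, neg_mul, hsQ0, neg_zero, sub_zero]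
  have dIQs : dm (Complex.I • Q) s = 0 := by
    simp [dm, star_smul, Complex.star_def, Complex.conj_I, smul_mul_assoc, mul_smul_comm,
      hQs, hss, hQs0, hsQ0, neg_mul]
  set M := Φ (s + (t + (x - star x))) - Φ s - Φ (t + (x - star x)) with hMdef
  have t0 := toolB Φ hΦ s (t + (x - star x)) Q
  rw [dQs, zero_add] at t0
  have t0' : dm Q M = 0 := by rw [hMdef, t0, phi_zero Φ hΦ]; abel
  have tI0 := toolB Φ hΦ s (t + (x - star x)) (Complex.I • Q)
  rw [dIQs, zero_add] at tI0
  have tI0' : dm (Complex.I • Q) M = 0 := by rw [hMdef, tI0, phi_zero Φ hΦ]; abel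
  have hbsk : star (t + (x - star x)) = -(t + (x - star x)) := by
    rw [star_add, htt, skew_w]; abel
  have hMsk : star M = -M := defect_skew Φ hΦ hsk P Q hP hQ hPQ hQP hPs hQs hPQ1
    hprime hPn hQn s (t + (x - star x)) hss hbsk
  have hext := extractL M Q hQs t0' tI0'
  have hQM0 : Q * M = 0 := hext.1
  have hMQ0 : M * Q = 0 := by
    have h := hext.2; rw [hMsk, neg_mul] at h; exact neg_eq_zero.mp h
  have hPM : P * M = M := by
    have h : P*M + Q*M = M := by rw [← add_mul, hPQ1, one_mul]
    rwa [hQM0, add_zero] at h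
  have hMP : M * P = M := by
    have h : M*P + M*Q = M := by rw [← mul_add, hPQ1, mul_one]
    rwa [hMQ0, add_zero] at h
  have key : ∀ z : 𝒜, M * (z * Q) = 0 := by
    intro z
    have hCs : star (P * z * Q) = Q * star z * P := by
      rw [star_mul, star_mul, hQs, hPs, ← mul_assoc]
    have es : star (s * (P * z * Q)) = star (P * z * Q) * star s := star_mul _ _
    have dCs : dm (P * z * Q) s = s * (P * z * Q) - star (s * (P * z * Q)) := by
      rw [dm, es, hss, mul_neg, neg_mul]
      abel
    have e1 : star (P * z * Q) * t = 0 := by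
      rw [hCs, mul_assoc, hPt, mul_zero]
    have e2 : star t * (P * z * Q) = 0 := by
      rw [htt, neg_mul, ← mul_assoc, ← mul_assoc, htP, zero_mul, zero_mul, neg_zero]
    have dCt : dm (P * z * Q) t = 0 := by rw [dm, e1, e2, sub_zero]
    have e3 : star (P * z * Q) * star x = 0 := by
      rw [hCs, mul_assoc, hPsx, mul_zero]
    have e4 : x * (P * z * Q) = 0 := by
      rw [← mul_assoc, ← mul_assoc, hxP, zero_mul, zero_mul]
    have dCw : dm (P * z * Q) (x - star x)
        = star (P * z * Q) * x - star x * (P * z * Q) := by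
      rw [dm, star_sub, star_star, mul_sub, sub_mul, e3, e4]
      abel
    have dCB : dm (P * z * Q) (t + (x - star x))
        = star (P * z * Q) * x - star x * (P * z * Q) := by
      rw [dm_add_right, dCt, zero_add, dCw]
    have hu1 : P * (s * (P * z * Q)) = s * (P * z * Q) := by rw [← mul_assoc, hPs1]
    have hCQ : (P * z * Q) * Q = P * z * Q := by rw [mul_assoc, hQ]
    have hu2 : (s * (P * z * Q)) * Q = s * (P * z * Q) := by rw [mul_assoc, hCQ]
    have humem := mk_mem hu1 hu2
    have hk1 : Q * (star (P * z * Q) * x - star x * (P * z * Q))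
        = star (P * z * Q) * x - star x * (P * z * Q) := by
      rw [mul_sub, hCs]
      simp only [mul_assoc, mulmul hQ, mulmul hQsx]
    have hk2 : (star (P * z * Q) * x - star x * (P * z * Q)) * Q
        = star (P * z * Q) * x - star x * (P * z * Q) := by
      rw [sub_mul, hCs]
      simp only [mul_assoc, hQ, hxQ]
    have hkmem := mk_mem hk1 hk2
    have hksk : star (star (P * z * Q) * x - star x * (P * z * Q))
        = -(star (P * z * Q) * x - star x * (P * z * Q)) := by
      rw [star_sub, star_mul, star_star, star_mul, star_star]; abel
    have hE3 := E3 Φ hΦ hsk P Q hP hQ hPQ hQP hPs hQs hPQ1 hprime hPn hQn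
      (s * (P*z*Q)) (star (P*z*Q) * x - star x * (P*z*Q)) humem hkmem hksk
    have t2 := toolB Φ hΦ s (t + (x - star x)) (P*z*Q)
    rw [dCs, dCB, hE3] at t2
    have t2' : dm (P*z*Q) M = 0 := by rw [hMdef, t2]; abel
    have h1' : P * (dm (P*z*Q) M) * Q = M * (z * Q) := by
      rw [dm, hCs, hMsk, neg_mul, sub_neg_eq_add]
      simp only [mul_add, add_mul, mul_assoc, hQ, mulmul0 hPQ, mulmul hMP, mulmul hPM,
        zero_mul, mul_zero, zero_add, add_zero]
    have h0 : P * (dm (P*z*Q) M) * Q = 0 := by rw [t2', mul_zero, zero_mul]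
    exact h1'.symm.trans h0
  have key' : ∀ z : 𝒜, M * z * Q = 0 := fun z => by rw [mul_assoc]; exact key z
  rcases hprime M Q key' with h | h
  · rw [hMdef] at h; rw [sub_sub, sub_eq_zero] at h; exact h
  · exact absurd h hQn

lemma G2a (s t : 𝒜) (hs : s = P*s*P) (hss : star s = -s) (ht : t = P*t*P)
    (htt : star t = -t) : Φ (s + t) = Φ s + Φ t := by
  have hQs0 : Q * s = 0 := corner_annL hQP hs
  have hsQ0 : s * Q = 0 := corner_annR hPQ hs
  have hPs1 : P * s = s := corner_projL hP hs
  have hQt0 : Q * t = 0 := corner_annL hQP ht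
  have htQ0 : t * Q = 0 := corner_annR hPQ ht
  have hPt1 : P * t = t := corner_projL hP ht
  have dQs : dm Q s = 0 := by
    rw [dm, hQs, hss, hQs0, neg_mul, hsQ0, neg_zero, sub_zero]
  have dIQs : dm (Complex.I • Q) s = 0 := by
    simp [dm, star_smul, Complex.star_def, Complex.conj_I, smul_mul_assoc, mul_smul_comm,
      hQs, hss, hQs0, hsQ0, neg_mul]
  have dQt : dm Q t = 0 := by
    rw [dm, hQs, htt, hQt0, neg_mul, htQ0, neg_zero, sub_zero]
  have dIQt : dm (Complex.I • Q) t = 0 := by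
    simp [dm, star_smul, Complex.star_def, Complex.conj_I, smul_mul_assoc, mul_smul_comm,
      hQs, htt, hQt0, htQ0, neg_mul]
  set M := Φ (s + t) - Φ s - Φ t with hMdef
  have t0 := toolB Φ hΦ s t Q
  rw [dQs, dQt, add_zero, phi_zero Φ hΦ] at t0
  have t0' : dm Q M = 0 := by rw [hMdef, t0]; abel
  have tI0 := toolB Φ hΦ s t (Complex.I • Q)
  rw [dIQs, dIQt, add_zero, phi_zero Φ hΦ] at tI0
  have tI0' : dm (Complex.I • Q) M = 0 := by rw [hMdef, tI0]; abel
  have hMsk : star M = -M := defect_skew Φ hΦ hsk P Q hP hQ hPQ hQP hPs hQs hPQ1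
    hprime hPn hQn s t hss htt
  have hext := extractL M Q hQs t0' tI0'
  have hQM0 : Q * M = 0 := hext.1
  have hMQ0 : M * Q = 0 := by
    have h := hext.2; rw [hMsk, neg_mul] at h; exact neg_eq_zero.mp h
  have hPM : P * M = M := by
    have h : P*M + Q*M = M := by rw [← add_mul, hPQ1, one_mul]
    rwa [hQM0, add_zero] at h
  have hMP : M * P = M := by
    have h : M*P + M*Q = M := by rw [← mul_add, hPQ1, mul_one]
    rwa [hMQ0, add_zero] at h
  have key : ∀ z : 𝒜, M * (z * Q) = 0 := by
    intro z
    have hCs : star (P * z * Q) = Q * star z * P := by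
      rw [star_mul, star_mul, hQs, hPs, ← mul_assoc]
    have es : star (s * (P * z * Q)) = star (P * z * Q) * star s := star_mul _ _
    have dCs : dm (P * z * Q) s = s * (P * z * Q) - star (s * (P * z * Q)) := by
      rw [dm, es, hss, mul_neg, neg_mul]
      abel
    have et : star (t * (P * z * Q)) = star (P * z * Q) * star t := star_mul _ _
    have dCt : dm (P * z * Q) t = t * (P * z * Q) - star (t * (P * z * Q)) := by
      rw [dm, et, htt, mul_neg, neg_mul]
      abel
    have hCQ : (P * z * Q) * Q = P * z * Q := by rw [mul_assoc, hQ]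
    have hu1 : P * (s * (P * z * Q)) = s * (P * z * Q) := by rw [← mul_assoc, hPs1]
    have hu2 : (s * (P * z * Q)) * Q = s * (P * z * Q) := by rw [mul_assoc, hCQ]
    have humem := mk_mem hu1 hu2
    have hv1 : P * (t * (P * z * Q)) = t * (P * z * Q) := by rw [← mul_assoc, hPt1]
    have hv2 : (t * (P * z * Q)) * Q = t * (P * z * Q) := by rw [mul_assoc, hCQ]
    have hvmem := mk_mem hv1 hv2
    have hG3 := G3 Φ hΦ hsk P Q hP hQ hPQ hQP hPs hQs hPQ1 hprime hPn hQn
      (s * (P*z*Q)) (t * (P*z*Q)) humem hvmem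
    have hsum : (s * (P*z*Q) - star (s * (P*z*Q))) + (t * (P*z*Q) - star (t * (P*z*Q)))
        = (s * (P*z*Q) + t * (P*z*Q)) - star (s * (P*z*Q) + t * (P*z*Q)) := by
      rw [star_add]; abel
    have t2 := toolB Φ hΦ s t (P*z*Q)
    rw [dCs, dCt, hsum, hG3] at t2
    have t2' : dm (P*z*Q) M = 0 := by rw [hMdef, t2]; abel
    have h1' : P * (dm (P*z*Q) M) * Q = M * (z * Q) := by
      rw [dm, hCs, hMsk, neg_mul, sub_neg_eq_add]
      simp only [mul_add, add_mul, mul_assoc, hQ, mulmul0 hPQ, mulmul hMP, mulmul hPM,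
        zero_mul, mul_zero, zero_add, add_zero]
    have h0 : P * (dm (P*z*Q) M) * Q = 0 := by rw [t2', mul_zero, zero_mul]
    exact h1'.symm.trans h0
  have key' : ∀ z : 𝒜, M * z * Q = 0 := fun z => by rw [mul_assoc]; exact key z
  rcases hprime M Q key' with h | h
  · rw [hMdef] at h; rw [sub_sub, sub_eq_zero] at h; exact h
  · exact absurd h hQn

lemma G2b (s t : 𝒜) (hs : s = Q*s*Q) (hss : star s = -s) (ht : t = Q*t*Q)
    (htt : star t = -t) : Φ (s + t) = Φ s + Φ t := by
  have hPs0 : P * s = 0 := corner_annL hPQ hs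
  have hsP0 : s * P = 0 := corner_annR hQP hs
  have hsQ1 : s * Q = s := corner_projR hQ hs
  have hPt0 : P * t = 0 := corner_annL hPQ ht
  have htP0 : t * P = 0 := corner_annR hQP ht
  have htQ1 : t * Q = t := corner_projR hQ ht
  have dPs : dm P s = 0 := by
    rw [dm, hPs, hss, hPs0, neg_mul, hsP0, neg_zero, sub_zero]
  have dIPs : dm (Complex.I • P) s = 0 := by
    simp [dm, star_smul, Complex.star_def, Complex.conj_I, smul_mul_assoc, mul_smul_comm,
      hPs, hss, hPs0, hsP0, neg_mul]
  have dPt : dm P t = 0 := by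
    rw [dm, hPs, htt, hPt0, neg_mul, htP0, neg_zero, sub_zero]
  have dIPt : dm (Complex.I • P) t = 0 := by
    simp [dm, star_smul, Complex.star_def, Complex.conj_I, smul_mul_assoc, mul_smul_comm,
      hPs, htt, hPt0, htP0, neg_mul]
  set M := Φ (s + t) - Φ s - Φ t with hMdef
  have t0 := toolB Φ hΦ s t P
  rw [dPs, dPt, add_zero, phi_zero Φ hΦ] at t0
  have t0' : dm P M = 0 := by rw [hMdef, t0]; abel
  have tI0 := toolB Φ hΦ s t (Complex.I • P)
  rw [dIPs, dIPt, add_zero, phi_zero Φ hΦ] at tI0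
  have tI0' : dm (Complex.I • P) M = 0 := by rw [hMdef, tI0]; abel
  have hMsk : star M = -M := defect_skew Φ hΦ hsk P Q hP hQ hPQ hQP hPs hQs hPQ1
    hprime hPn hQn s t hss htt
  have hext := extractL M P hPs t0' tI0'
  have hPM0 : P * M = 0 := hext.1
  have hMP0 : M * P = 0 := by
    have h := hext.2; rw [hMsk, neg_mul] at h; exact neg_eq_zero.mp h
  have hQM : Q * M = M := by
    have h : P*M + Q*M = M := by rw [← add_mul, hPQ1, one_mul]
    rwa [hPM0, zero_add] at h
  have hMQ : M * Q = M := by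
    have h : M*P + M*Q = M := by rw [← mul_add, hPQ1, mul_one]
    rwa [hMP0, zero_add] at h
  have key : ∀ z : 𝒜, M * (z * P) = 0 := by
    intro z
    have hCs : star (Q * z * P) = P * star z * Q := by
      rw [star_mul, star_mul, hPs, hQs, ← mul_assoc]
    have es : star (star (Q * z * P) * s) = star s * (Q * z * P) := by
      rw [star_mul, star_star]
    have dCs : dm (Q * z * P) s
        = star (Q * z * P) * s - star (star (Q * z * P) * s) := by
      rw [dm, es]
    have et : star (star (Q * z * P) * t) = star t * (Q * z * P) := by
      rw [star_mul, star_star]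
    have dCt : dm (Q * z * P) t
        = star (Q * z * P) * t - star (star (Q * z * P) * t) := by
      rw [dm, et]
    have hu1 : P * (star (Q * z * P) * s) = star (Q * z * P) * s := by
      rw [hCs]
      simp only [mul_assoc, mulmul hP]
    have hu2 : (star (Q * z * P) * s) * Q = star (Q * z * P) * s := by
      rw [mul_assoc, hsQ1]
    have humem := mk_mem hu1 hu2
    have hv1 : P * (star (Q * z * P) * t) = star (Q * z * P) * t := by
      rw [hCs]
      simp only [mul_assoc, mulmul hP]
    have hv2 : (star (Q * z * P) * t) * Q = star (Q * z * P) * t := by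
      rw [mul_assoc, htQ1]
    have hvmem := mk_mem hv1 hv2
    have hG3 := G3 Φ hΦ hsk P Q hP hQ hPQ hQP hPs hQs hPQ1 hprime hPn hQn
      (star (Q*z*P) * s) (star (Q*z*P) * t) humem hvmem
    have hsum : (star (Q*z*P) * s - star (star (Q*z*P) * s))
        + (star (Q*z*P) * t - star (star (Q*z*P) * t))
        = (star (Q*z*P) * s + star (Q*z*P) * t)
          - star (star (Q*z*P) * s + star (Q*z*P) * t) := by
      rw [star_add]; abel
    have t2 := toolB Φ hΦ s t (Q*z*P)
    rw [dCs, dCt, hsum, hG3] at t2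
    have t2' : dm (Q*z*P) M = 0 := by rw [hMdef, t2]; abel
    have h1' : Q * (dm (Q*z*P) M) * P = M * (z * P) := by
      rw [dm, hCs, hMsk, neg_mul, sub_neg_eq_add]
      simp only [mul_add, add_mul, mul_assoc, hP, mulmul0 hQP, mulmul hMQ, mulmul hQM,
        zero_mul, mul_zero, zero_add, add_zero]
    have h0 : Q * (dm (Q*z*P) M) * P = 0 := by rw [t2', mul_zero, zero_mul]
    exact h1'.symm.trans h0
  have key' : ∀ z : 𝒜, M * z * P = 0 := fun z => by rw [mul_assoc]; exact key z
  rcases hprime M P key' with h | h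
  · rw [hMdef] at h; rw [sub_sub, sub_eq_zero] at h; exact h
  · exact absurd h hPn

lemma GSigma (S : 𝒜) (hS : star S = -S) :
    Φ S = Φ (P*S*P) + (Φ (Q*S*Q) + Φ (P*S*Q - star (P*S*Q))) := by
  have hm1 : P*S*P = P*(P*S*P)*P :=
    mk_mem (by rw [← mul_assoc, ← mul_assoc, hP]) (by rw [mul_assoc, hP])
  have hsk1 : star (P*S*P) = -(P*S*P) := by
    simp only [star_mul, hPs, hS, mul_neg, neg_mul, mul_assoc]
  have hm2 : Q*S*Q = Q*(Q*S*Q)*Q :=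
    mk_mem (by rw [← mul_assoc, ← mul_assoc, hQ]) (by rw [mul_assoc, hQ])
  have hsk2 : star (Q*S*Q) = -(Q*S*Q) := by
    simp only [star_mul, hQs, hS, mul_neg, neg_mul, mul_assoc]
  have hmx : P*S*Q = P*(P*S*Q)*Q :=
    mk_mem (by rw [← mul_assoc, ← mul_assoc, hP]) (by rw [mul_assoc, hQ])
  have hsx : star (P*S*Q) = -(Q*S*P) := by
    simp only [star_mul, hPs, hQs, hS, mul_neg, neg_mul, mul_assoc]
  have hdecomp : P*S*P + (Q*S*Q + (P*S*Q - star (P*S*Q))) = S := by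
    rw [hsx, sub_neg_eq_add]
    have e : (P + Q) * S * (P + Q) = S := by rw [hPQ1, one_mul, mul_one]
    conv_rhs => rw [← e]
    simp only [add_mul, mul_add]
    abel
  have e2 : Q*S*Q + (P*S*Q - star (P*S*Q)) = (P*S*Q - star (P*S*Q)) + Q*S*Q := by abel
  calc Φ S = Φ (P*S*P + (Q*S*Q + (P*S*Q - star (P*S*Q)))) := by rw [hdecomp]
    _ = Φ (P*S*P) + Φ (Q*S*Q + (P*S*Q - star (P*S*Q))) :=
        GS Φ hΦ hsk P Q hP hQ hPQ hQP hPs hQs hPQ1 hprime hPn hQn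
          (P*S*P) (Q*S*Q) (P*S*Q) hm1 hsk1 hm2 hsk2 hmx
    _ = Φ (P*S*P) + (Φ (P*S*Q - star (P*S*Q)) + Φ (Q*S*Q)) := by
        rw [e2, E3 Φ hΦ hsk P Q hP hQ hPQ hQP hPs hQs hPQ1 hprime hPn hQn
          (P*S*Q) (Q*S*Q) hmx hm2 hsk2]
    _ = Φ (P*S*P) + (Φ (Q*S*Q) + Φ (P*S*Q - star (P*S*Q))) := by abel

lemma skewAdd (S T : 𝒜) (hS : star S = -S) (hT : star T = -T) :
    Φ (S + T) = Φ S + Φ T := by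
  have hST : star (S+T) = -(S+T) := by rw [star_add, hS, hT, neg_add]
  have hm1S : P*S*P = P*(P*S*P)*P :=
    mk_mem (by rw [← mul_assoc, ← mul_assoc, hP]) (by rw [mul_assoc, hP])
  have hsk1S : star (P*S*P) = -(P*S*P) := by
    simp only [star_mul, hPs, hS, mul_neg, neg_mul, mul_assoc]
  have hm2S : Q*S*Q = Q*(Q*S*Q)*Q :=
    mk_mem (by rw [← mul_assoc, ← mul_assoc, hQ]) (by rw [mul_assoc, hQ])
  have hsk2S : star (Q*S*Q) = -(Q*S*Q) := by
    simp only [star_mul, hQs, hS, mul_neg, neg_mul, mul_assoc]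
  have hmxS : P*S*Q = P*(P*S*Q)*Q :=
    mk_mem (by rw [← mul_assoc, ← mul_assoc, hP]) (by rw [mul_assoc, hQ])
  have hm1T : P*T*P = P*(P*T*P)*P :=
    mk_mem (by rw [← mul_assoc, ← mul_assoc, hP]) (by rw [mul_assoc, hP])
  have hsk1T : star (P*T*P) = -(P*T*P) := by
    simp only [star_mul, hPs, hT, mul_neg, neg_mul, mul_assoc]
  have hm2T : Q*T*Q = Q*(Q*T*Q)*Q :=
    mk_mem (by rw [← mul_assoc, ← mul_assoc, hQ]) (by rw [mul_assoc, hQ])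
  have hsk2T : star (Q*T*Q) = -(Q*T*Q) := by
    simp only [star_mul, hQs, hT, mul_neg, neg_mul, mul_assoc]
  have hmxT : P*T*Q = P*(P*T*Q)*Q :=
    mk_mem (by rw [← mul_assoc, ← mul_assoc, hP]) (by rw [mul_assoc, hQ])
  have c1 : P*(S+T)*P = P*S*P + P*T*P := by rw [mul_add, add_mul]
  have c2 : Q*(S+T)*Q = Q*S*Q + Q*T*Q := by rw [mul_add, add_mul]
  have c3 : P*(S+T)*Q = P*S*Q + P*T*Q := by rw [mul_add, add_mul]
  rw [GSigma Φ hΦ hsk P Q hP hQ hPQ hQP hPs hQs hPQ1 hprime hPn hQn (S+T) hST,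
    c1, c2, c3,
    G2a Φ hΦ hsk P Q hP hQ hPQ hQP hPs hQs hPQ1 hprime hPn hQn
      (P*S*P) (P*T*P) hm1S hsk1S hm1T hsk1T,
    G2b Φ hΦ hsk P Q hP hQ hPQ hQP hPs hQs hPQ1 hprime hPn hQn
      (Q*S*Q) (Q*T*Q) hm2S hsk2S hm2T hsk2T,
    G3 Φ hΦ hsk P Q hP hQ hPQ hQP hPs hQs hPQ1 hprime hPn hQn
      (P*S*Q) (P*T*Q) hmxS hmxT,
    GSigma Φ hΦ hsk P Q hP hQ hPQ hQP hPs hQs hPQ1 hprime hPn hQn S hS,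
    GSigma Φ hΦ hsk P Q hP hQ hPQ hQP hPs hQs hPQ1 hprime hPn hQn T hT]
  abel

end Phi

lemma lemA (T : 𝒜) : dm (((1:ℂ)/2) • (1:𝒜)) T = ((1:ℂ)/2) • (T - star T) := by
  simp [dm, star_smul, smul_mul_assoc, mul_smul_comm, smul_sub, Complex.star_def, map_div₀]

lemma lemB (T : 𝒜) : dm ((Complex.I/2) • (1:𝒜)) T = (-(Complex.I/2)) • (T + star T) := by
  simp only [dm, star_smul, star_one, Complex.star_def, map_div₀, Complex.conj_I,
    map_ofNat, smul_mul_assoc, one_mul, mul_smul_comm, mul_one, smul_add]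
  module

section Phase1
variable (Φ : 𝒜 → 𝒜)
  (hΦ : ∀ A B : 𝒜, Φ (star A * B - star B * A) =
      (star (Φ A) * B - star B * Φ A) + (star A * Φ B - star (Φ B) * A))
include hΦ

lemma e1 (T : 𝒜) : Φ (((1:ℂ)/2) • (T - star T)) =
    dm (Φ (((1:ℂ)/2) • (1:𝒜))) T + ((1:ℂ)/2) • (Φ T - star (Φ T)) := by
  have h := hdm Φ hΦ (((1:ℂ)/2) • (1:𝒜)) T
  rw [lemA, lemA] at h
  exact h

lemma e2 (T : 𝒜) : Φ ((-(Complex.I/2)) • (T + star T)) =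
    dm (Φ ((Complex.I/2) • (1:𝒜))) T + (-(Complex.I/2)) • (Φ T + star (Φ T)) := by
  have h := hdm Φ hΦ ((Complex.I/2) • (1:𝒜)) T
  rw [lemB, lemB] at h
  exact h

variable (h1 : star (Φ (((1 : ℂ)/2) • (1 : 𝒜))) = Φ (((1 : ℂ)/2) • (1 : 𝒜)))
  (h2 : star (Φ ((Complex.I/2) • (1 : 𝒜))) = Φ ((Complex.I/2) • (1 : 𝒜)))
include h1 h2

lemma Hzero : Φ (((1:ℂ)/2) • (1:𝒜)) = 0 ∧ Φ ((Complex.I/2) • (1:𝒜)) = 0 := by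
  set H := Φ (((1:ℂ)/2) • (1:𝒜)) with hH
  set K := Φ ((Complex.I/2) • (1:𝒜)) with hK
  have f1 : ∀ S : 𝒜, star S = -S → ((1:ℂ)/2) • (Φ S + star (Φ S)) = dm H S := by
    intro S hS
    have h := e1 Φ hΦ S
    rw [hS] at h
    have harg : ((1:ℂ)/2) • (S - -S) = S := by module
    rw [harg, ← hH] at h
    linear_combination (norm := module) h
  have f2 : ∀ S : 𝒜, star S = -S → (Complex.I/2) • (Φ S + star (Φ S)) = dm K S := by
    intro S hS
    have h := e2 Φ hΦ S
    rw [hS] at h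
    have harg : (-(Complex.I/2)) • (S + -S) = (0:𝒜) := by module
    rw [harg, phi_zero Φ hΦ, ← hK] at h
    linear_combination (norm := module) h
  have rel : ∀ S : 𝒜, star S = -S → dm K S = Complex.I • dm H S := by
    intro S hS
    rw [← f1 S hS, ← f2 S hS, smul_smul]
    congr 1
    ring
  have hSI : star (Complex.I • (1:𝒜)) = -(Complex.I • (1:𝒜)) := by
    simp [star_smul, Complex.star_def, Complex.conj_I]
  have key := rel (Complex.I • (1:𝒜)) hSI
  rw [dm, dm, h1, h2, hSI] at key
  have key2 : Complex.I • K + Complex.I • K = Complex.I • (Complex.I • H + Complex.I • H) := by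
    simpa [mul_smul_comm, smul_mul_assoc, mul_one, one_mul, smul_add, sub_neg_eq_add]
      using key
  have key3 : (2:ℂ) • (Complex.I • K) = (2:ℂ) • (-H) := by
    rw [two_smul, two_smul]
    rw [key2]
    simp [smul_smul, Complex.I_mul_I, smul_add]
  have hIK : Complex.I • K = -H := cancel2' _ _ key3
  have hIK2 : Complex.I • K = H := by
    have h := congrArg (fun z : 𝒜 => star z) hIK
    simp only [star_smul, Complex.star_def, Complex.conj_I, h2, star_neg, h1, neg_smul] at h
    exact neg_injective h
  have hHn : -H = H := by rw [← hIK, hIK2]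
  have hHH : H = 0 := by
    apply cancel2'
    rw [two_smul, smul_zero]
    nth_rewrite 2 [← hHn]
    abel
  constructor
  · exact hHH
  · have hz : Complex.I • K = 0 := by rw [hIK2, hHH]
    have h := congrArg (fun z : 𝒜 => (-Complex.I) • z) hz
    simpa [smul_smul, neg_mul, Complex.I_mul_I] using h

lemma hskP : ∀ S : 𝒜, star S = -S → star (Φ S) = -Φ S := by
  intro S hS
  have h := e1 Φ hΦ S
  rw [hS, (Hzero Φ hΦ h1 h2).1, dm_zero_left, zero_add] at h
  have harg : ((1:ℂ)/2) • (S - -S) = S := by module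
  rw [harg] at h
  linear_combination (norm := module) (2:ℂ) • h

lemma eqT1 (T : 𝒜) :
    Φ (((1:ℂ)/2) • (T - star T)) = ((1:ℂ)/2) • (Φ T - star (Φ T)) := by
  have h := e1 Φ hΦ T
  rwa [(Hzero Φ hΦ h1 h2).1, dm_zero_left, zero_add] at h

lemma eqT2 (T : 𝒜) :
    Φ ((-(Complex.I/2)) • (T + star T)) = (-(Complex.I/2)) • (Φ T + star (Φ T)) := by
  have h := e2 Φ hΦ T
  rwa [(Hzero Φ hΦ h1 h2).2, dm_zero_left, zero_add] at h

lemma hdec (T : 𝒜) : Φ T = Φ (((1:ℂ)/2) • (T - star T))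
    + Complex.I • Φ ((-(Complex.I/2)) • (T + star T)) := by
  rw [eqT1 Φ hΦ h1 h2 T, eqT2 Φ hΦ h1 h2 T, smul_smul, cIhalf]
  module

end Phase1

end Stmt11Aux

/-- In a prime unital ∗-algebra over `ℂ` containing a nontrivial
projection `P₁`, a nonlinear `⋄`-derivation `Φ` with `Φ(I/2)`, `Φ(iI/2)` self-adjoint
is additive. -/
theorem stmt11 {𝒜 : Type*} [Ring 𝒜] [Algebra ℂ 𝒜] [StarRing 𝒜] [StarModule ℂ 𝒜]
    (hprime : ∀ a b : 𝒜, (∀ x : 𝒜, a * x * b = 0) → a = 0 ∨ b = 0)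
    (P₁ : 𝒜) (hP₁star : star P₁ = P₁) (hP₁idem : P₁ * P₁ = P₁)
    (hP₁ne0 : P₁ ≠ 0) (hP₁ne1 : P₁ ≠ 1)
    (Φ : 𝒜 → 𝒜)
    (hΦ : ∀ A B : 𝒜, Φ (star A * B - star B * A) =
      (star (Φ A) * B - star B * Φ A) + (star A * Φ B - star (Φ B) * A))
    (h1 : star (Φ (((1 : ℂ)/2) • (1 : 𝒜))) = Φ (((1 : ℂ)/2) • (1 : 𝒜)))
    (h2 : star (Φ ((Complex.I/2) • (1 : 𝒜))) = Φ ((Complex.I/2) • (1 : 𝒜))) :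
    ∀ A B : 𝒜, Φ (A + B) = Φ A + Φ B := by
  intro A B
  have hQQ : (1 - P₁) * (1 - P₁) = 1 - P₁ := by
    rw [sub_mul, one_mul, mul_sub, mul_one, hP₁idem]; abel
  have hPQ : P₁ * (1 - P₁) = 0 := by rw [mul_sub, mul_one, hP₁idem, sub_self]
  have hQP : (1 - P₁) * P₁ = 0 := by rw [sub_mul, one_mul, hP₁idem, sub_self]
  have hQs : star (1 - P₁) = 1 - P₁ := by rw [star_sub, star_one, hP₁star]
  have hPQ1 : P₁ + (1 - P₁) = 1 := by abel
  have hQn : (1 - P₁) ≠ 0 := fun h => hP₁ne1 (by rw [sub_eq_zero] at h; exact h.symm)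
  have hsk := Stmt11Aux.hskP Φ hΦ h1 h2
  have hdec' := Stmt11Aux.hdec Φ hΦ h1 h2
  have hSA := Stmt11Aux.skewAdd Φ hΦ hsk P₁ (1 - P₁) hP₁idem hQQ hPQ hQP hP₁star hQs hPQ1
    hprime hP₁ne0 hQn
  have sk1 : ∀ X : 𝒜, star (((1:ℂ)/2) • (X - star X))
      = -(((1:ℂ)/2) • (X - star X)) := by
    intro X
    simp only [star_smul, star_sub, star_star, Complex.star_def, map_div₀, map_one,
      map_ofNat]
    module
  have sk2 : ∀ X : 𝒜, star ((-(Complex.I/2)) • (X + star X))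
      = -((-(Complex.I/2)) • (X + star X)) := by
    intro X
    simp only [star_smul, star_add, star_star, Complex.star_def, map_neg, map_div₀,
      Complex.conj_I, map_ofNat]
    module
  have d1 : ((1:ℂ)/2) • ((A+B) - star (A+B))
      = ((1:ℂ)/2) • (A - star A) + ((1:ℂ)/2) • (B - star B) := by
    rw [star_add]; module
  have d2 : (-(Complex.I/2)) • ((A+B) + star (A+B))
      = (-(Complex.I/2)) • (A + star A) + (-(Complex.I/2)) • (B + star B) := by
    rw [star_add]; module
  calc Φ (A + B) = Φ (((1:ℂ)/2) • ((A+B) - star (A+B)))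
        + Complex.I • Φ ((-(Complex.I/2)) • ((A+B) + star (A+B))) := hdec' (A+B)
    _ = Φ (((1:ℂ)/2) • (A - star A) + ((1:ℂ)/2) • (B - star B))
        + Complex.I • Φ ((-(Complex.I/2)) • (A + star A)
            + (-(Complex.I/2)) • (B + star B)) := by rw [d1, d2]
    _ = (Φ (((1:ℂ)/2) • (A - star A)) + Φ (((1:ℂ)/2) • (B - star B)))
        + Complex.I • (Φ ((-(Complex.I/2)) • (A + star A))
            + Φ ((-(Complex.I/2)) • (B + star B))) := by
        rw [hSA _ _ (sk1 A) (sk1 B), hSA _ _ (sk2 A) (sk2 B)]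
    _ = (Φ (((1:ℂ)/2) • (A - star A)) + Complex.I • Φ ((-(Complex.I/2)) • (A + star A)))
        + (Φ (((1:ℂ)/2) • (B - star B))
            + Complex.I • Φ ((-(Complex.I/2)) • (B + star B))) := by
        rw [smul_add]; abel
    _ = Φ A + Φ B := by rw [← hdec' A, ← hdec' B]
end

section
/- Let 𝒜 be a prime unital ∗-algebra over ℂ containing a nontrivial projection P₁, and let Φ : 𝒜 → 𝒜 be a nonlinear ⋄-derivation such that Φ(I/2) and Φ(iI/2) are self-adjoint. Then Φ preserves the star operation: Φ(A*) = Φ(A)* for every A ∈ 𝒜. -/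
/-- In a prime unital ∗-algebra over `ℂ` containing a nontrivial
projection `P₁`, a nonlinear `⋄`-derivation `Φ` with `Φ(I/2)`, `Φ(iI/2)` self-adjoint
preserves the star operation: `Φ(A*) = Φ(A)*`. -/
theorem stmt13 {𝒜 : Type*} [Ring 𝒜] [Algebra ℂ 𝒜] [StarRing 𝒜] [StarModule ℂ 𝒜]
    (hprime : ∀ a b : 𝒜, (∀ x : 𝒜, a * x * b = 0) → a = 0 ∨ b = 0)
    (P₁ : 𝒜) (hP₁star : star P₁ = P₁) (hP₁idem : P₁ * P₁ = P₁)
    (hP₁ne0 : P₁ ≠ 0) (hP₁ne1 : P₁ ≠ 1)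
    (Φ : 𝒜 → 𝒜)
    (hΦ : ∀ A B : 𝒜, Φ (star A * B - star B * A) =
      (star (Φ A) * B - star B * Φ A) + (star A * Φ B - star (Φ B) * A))
    (h1 : star (Φ (((1 : ℂ)/2) • (1 : 𝒜))) = Φ (((1 : ℂ)/2) • (1 : 𝒜)))
    (h2 : star (Φ ((Complex.I/2) • (1 : 𝒜))) = Φ ((Complex.I/2) • (1 : 𝒜))) :
    ∀ A : 𝒜, Φ (star A) = star (Φ A) := by
  have cancel : ∀ (c : ℂ) (x y : 𝒜), c ≠ 0 → c • x = c • y → x = y := by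
    intro c x y hc hxy
    have := congrArg (fun z => c⁻¹ • z) hxy
    simpa [smul_smul, inv_mul_cancel₀ hc] using this
  set h : 𝒜 := ((1:ℂ)/2) • 1 with hh
  set k : 𝒜 := (Complex.I/2) • 1 with hk
  have hsh : star h = h := by
    rw [hh, star_smul, star_one]
    norm_num
  have hsk : star k = -k := by
    rw [hk, star_smul, star_one, ← neg_smul]
    congr 1
    simp [div_eq_mul_inv, Complex.conj_I]
  -- Step A : Φ k = I • Φ h
  have e1 : Φ k = Complex.I • Φ h := by
    have a : star h * k - star k * h = k := by
      rw [hsh, hsk, hh, hk]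
      simp [smul_mul_assoc, mul_smul_comm, smul_smul]
      module
    have := hΦ h k
    rw [a] at this
    rw [this, h1, hsh, hsk, h2]
    rw [hh, hk]
    simp only [smul_mul_assoc, mul_smul_comm, one_mul, mul_one, neg_smul, neg_mul, sub_neg_eq_add,
      smul_smul]
    module
  -- Step B : Φ h = 0
  have e2 : Φ h = 0 := by
    have hs : Complex.I • Φ h = -(Complex.I • Φ h) := by
      have hx := h2
      rw [e1, star_smul, h1, Complex.star_def, Complex.conj_I, neg_smul] at hx
      exact hx.symm
    have h2I : ((2:ℂ) * Complex.I) • Φ h = 0 := by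
      rw [two_mul, add_smul]
      nth_rewrite 2 [hs]
      abel
    have hne : (2 : ℂ) * Complex.I ≠ 0 := by
      simp [Complex.I_ne_zero]
    calc Φ h = (((2:ℂ) * Complex.I)⁻¹ * ((2:ℂ) * Complex.I)) • Φ h := by
            rw [inv_mul_cancel₀ hne, one_smul]
      _ = 0 := by rw [mul_smul, h2I, smul_zero]
  have e3 : Φ k = 0 := by rw [e1, e2, smul_zero]
  -- key identities
  have eq1 : ∀ B : 𝒜, Φ (((1:ℂ)/2) • (star B - B)) = ((1:ℂ)/2) • (star (Φ B) - Φ B) := by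
    intro B
    have a : star B * h - star h * B = ((1:ℂ)/2) • (star B - B) := by
      rw [hsh, hh]; simp [mul_smul_comm, smul_mul_assoc, smul_sub]
    have := hΦ B h
    rw [a] at this
    rw [this, e2, hsh, hh]
    simp [mul_smul_comm, smul_mul_assoc, smul_sub]
  have eq2 : ∀ B : 𝒜, Φ (((1:ℂ)/2) • (B - star B)) = ((1:ℂ)/2) • (Φ B - star (Φ B)) := by
    intro B
    have a : star h * B - star B * h = ((1:ℂ)/2) • (B - star B) := by
      rw [hsh, hh]; simp [mul_smul_comm, smul_mul_assoc, smul_sub]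
    have := hΦ h B
    rw [a] at this
    rw [this, e2, hsh, hh]
    simp [mul_smul_comm, smul_mul_assoc, smul_sub]
  have eq3 : ∀ B : 𝒜, Φ ((Complex.I/2) • (star B + B)) = (Complex.I/2) • (star (Φ B) + Φ B) := by
    intro B
    have a : star B * k - star k * B = (Complex.I/2) • (star B + B) := by
      rw [hsk, hk]; simp [mul_smul_comm, smul_mul_assoc, smul_add, sub_neg_eq_add]
    have := hΦ B k
    rw [a] at this
    rw [this, e3, hsk, hk]
    simp [mul_smul_comm, smul_mul_assoc, smul_add, sub_neg_eq_add]
  intro A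
  have E1 := eq1 A
  have E2 := eq2 (star A)
  simp only [star_star] at E2
  have E3 := eq3 A
  have E4 := eq3 (star A)
  simp only [star_star] at E4
  rw [add_comm A (star A)] at E4
  have P : star (Φ A) - Φ A = Φ (star A) - star (Φ (star A)) :=
    cancel _ _ _ (by norm_num) (E1.symm.trans E2)
  have Q : star (Φ A) + Φ A = star (Φ (star A)) + Φ (star A) :=
    cancel _ _ _ (by simp [Complex.I_ne_zero]) (E3.symm.trans E4)
  have R : (2:ℂ) • star (Φ A) = (2:ℂ) • Φ (star A) := by
    calc (2:ℂ) • star (Φ A) = (star (Φ A) + Φ A) + (star (Φ A) - Φ A) := by module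
      _ = (star (Φ (star A)) + Φ (star A)) + (Φ (star A) - star (Φ (star A))) := by rw [Q, P]
      _ = (2:ℂ) • Φ (star A) := by module
  exact (cancel 2 _ _ two_ne_zero R).symm
end

section
/- Let 𝒜 be a unital ∗-algebra over ℂ and let Φ : 𝒜 → 𝒜 be a nonlinear ⋄-derivation that is additive (Φ(X + Y) = Φ(X) + Φ(Y) for all X, Y ∈ 𝒜) and satisfies Φ(X*) = Φ(X)* and Φ(iX) = iΦ(X) for all X ∈ 𝒜. Then Φ is a derivation: Φ(AB) = Φ(A)B + AΦ(B) for all A, B ∈ 𝒜. -/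
/-- If `Φ` is an additive nonlinear `⋄`-derivation on a unital
∗-algebra over `ℂ` preserving the star operation and satisfying `Φ(iX) = iΦ(X)`,
then `Φ` is a derivation: `Φ(AB) = Φ(A)B + AΦ(B)`. -/
theorem stmt16 {𝒜 : Type*} [Ring 𝒜] [Algebra ℂ 𝒜] [StarRing 𝒜] [StarModule ℂ 𝒜]
    (Φ : 𝒜 → 𝒜)
    (hΦ : ∀ A B : 𝒜, Φ (star A * B - star B * A) =
      (star (Φ A) * B - star B * Φ A) + (star A * Φ B - star (Φ B) * A))
    (hadd : ∀ X Y : 𝒜, Φ (X + Y) = Φ X + Φ Y)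
    (hstar : ∀ X : 𝒜, Φ (star X) = star (Φ X))
    (hi : ∀ X : 𝒜, Φ (Complex.I • X) = Complex.I • Φ X) :
    ∀ A B : 𝒜, Φ (A * B) = Φ A * B + A * Φ B := by
  have h0 : Φ 0 = 0 := by
    have h := hadd 0 0
    rw [add_zero] at h
    exact (left_eq_add.mp h)
  have hneg : ∀ X : 𝒜, Φ (-X) = -Φ X := by
    intro X
    have h := hadd X (-X)
    rw [add_neg_cancel, h0] at h
    exact eq_neg_of_add_eq_zero_right h.symm
  intro A B
  set T := A * B with hT
  set S := Φ A * B + A * Φ B with hS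
  -- first identity : Φ (T - star T) = S - star S
  have h1 := hΦ (star A) B
  rw [star_star, hstar, star_star] at h1
  have e1 : A * B - star B * star A = T - star T := by rw [hT, star_mul]
  have e1' : Φ A * B - star B * star (Φ A) + (A * Φ B - star (Φ B) * star A)
      = S - star S := by
    rw [hS, star_add, star_mul, star_mul]
    abel
  rw [e1, e1'] at h1
  -- second identity : (-I) • Φ (T + star T) = (-I) • (S + star S)
  have h2 := hΦ (Complex.I • star A) B
  simp only [star_smul, star_star, Complex.star_def, Complex.conj_I, hi, hstar] at h2
  have e2 : (-Complex.I) • A * B - star B * Complex.I • star A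
      = (-Complex.I) • (T + star T) := by
    rw [hT, star_mul, smul_mul_assoc, mul_smul_comm]
    module
  have e2' : (-Complex.I) • Φ A * B - star B * Complex.I • star (Φ A) +
      ((-Complex.I) • A * Φ B - star (Φ B) * Complex.I • star A)
      = (-Complex.I) • (S + star S) := by
    rw [hS, star_add, star_mul, star_mul, smul_mul_assoc, smul_mul_assoc,
      mul_smul_comm, mul_smul_comm]
    module
  have hnegI : Φ ((-Complex.I) • (T + star T)) = (-Complex.I) • Φ (T + star T) := by
    rw [neg_smul, hneg, hi, neg_smul]
  rw [e2, e2', hnegI] at h2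
  have cancelI : Φ (T + star T) = S + star S := by
    have h := congrArg (fun z => Complex.I • z) h2
    simpa [smul_smul, mul_neg, Complex.I_mul_I] using h
  -- add the two identities
  have hsum : Φ T + Φ T = S + S := by
    have h := hadd (T + star T) (T - star T)
    have harg : T + star T + (T - star T) = T + T := by abel
    rw [harg, hadd, cancelI, h1] at h
    rw [h]
    abel
  have h2S : (2 : ℂ) • Φ T = (2 : ℂ) • S := by
    rw [two_smul, two_smul]; exact hsum
  have := congrArg (fun z => ((2 : ℂ)⁻¹) • z) h2S
  simpa [smul_smul] using this
end
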